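/- For every positive integer p, one has (p!)^2 · (p+2)^{p(p+1)} ≤ (p+1)^{p(p+3)}. -/

import Mathlib

open Nat

lemma aux_two_mul_pow_le (n : ℕ) :
    2 * ((n : ℝ) + 1) ^ (n + 1) ≤ ((n : ℝ) + 2) ^ (n + 1) := by
  have hx : (0 : ℝ) < (n : ℝ) + 1 := by positivity
  have hb := one_add_mul_le_pow (a := 1 / ((n : ℝ) + 1)) (by have := one_div_nonneg.mpr hx.le; linarith) (n + 1)
  have h1 : (1 : ℝ) + ((n : ℕ) + 1 : ℕ) * (1 / ((n : ℝ) + 1)) = 2 := by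
    push_cast; field_simp; norm_num
  rw [h1] at hb
  have h2 : ((1 : ℝ) + 1 / ((n : ℝ) + 1)) ^ (n + 1) * ((n : ℝ) + 1) ^ (n + 1)
      = ((n : ℝ) + 2) ^ (n + 1) := by
    rw [← mul_pow]; congr 1; field_simp; ring
  calc 2 * ((n : ℝ) + 1) ^ (n + 1)
      ≤ ((1 : ℝ) + 1 / ((n : ℝ) + 1)) ^ (n + 1) * ((n : ℝ) + 1) ^ (n + 1) :=
        mul_le_mul_of_nonneg_right hb (by positivity)
    _ = ((n : ℝ) + 2) ^ (n + 1) := h2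

lemma aux_fact_bound (p : ℕ) : (2 : ℝ) ^ p * (p ! : ℝ) ≤ ((p : ℝ) + 1) ^ p := by
  induction p with
  | zero => simp
  | succ n ih =>
    calc (2 : ℝ) ^ (n + 1) * ((n + 1)! : ℝ)
        = ((n : ℝ) + 1) * 2 * ((2 : ℝ) ^ n * (n ! : ℝ)) := by
          rw [Nat.factorial_succ]; push_cast; ring
      _ ≤ ((n : ℝ) + 1) * 2 * (((n : ℝ) + 1) ^ n) :=
          mul_le_mul_of_nonneg_left ih (by positivity)
      _ = 2 * ((n : ℝ) + 1) ^ (n + 1) := by ring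
      _ ≤ ((n : ℝ) + 2) ^ (n + 1) := aux_two_mul_pow_le n
      _ = (((n + 1 : ℕ) : ℝ) + 1) ^ (n + 1) := by push_cast; ring_nf

lemma aux_exp_bound (p : ℕ) :
    ((p : ℝ) + 2) ^ (p + 1) ≤ 4 * ((p : ℝ) + 1) ^ (p + 1) := by
  have hx : (0 : ℝ) < (p : ℝ) + 1 := by positivity
  have h1 : (1 : ℝ) + 1 / ((p : ℝ) + 1) ≤ Real.exp (1 / ((p : ℝ) + 1)) := by
    have := Real.add_one_le_exp (1 / ((p : ℝ) + 1)); linarith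
  have h2 : ((1 : ℝ) + 1 / ((p : ℝ) + 1)) ^ (p + 1)
      ≤ Real.exp (1 / ((p : ℝ) + 1)) ^ (p + 1) :=
    pow_le_pow_left₀ (by positivity) h1 _
  have h3 : Real.exp (1 / ((p : ℝ) + 1)) ^ (p + 1) = Real.exp 1 := by
    rw [← Real.exp_nat_mul]
    congr 1
    field_simp
    exact Nat.cast_succ p
  have h4 : Real.exp 1 ≤ 4 := by
    have := Real.exp_one_lt_d9; linarith
  have h5 : ((1 : ℝ) + 1 / ((p : ℝ) + 1)) ^ (p + 1) * ((p : ℝ) + 1) ^ (p + 1)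
      = ((p : ℝ) + 2) ^ (p + 1) := by
    rw [← mul_pow]; congr 1; field_simp; ring
  calc ((p : ℝ) + 2) ^ (p + 1)
      = ((1 : ℝ) + 1 / ((p : ℝ) + 1)) ^ (p + 1) * ((p : ℝ) + 1) ^ (p + 1) := h5.symm
    _ ≤ 4 * ((p : ℝ) + 1) ^ (p + 1) := by
        apply mul_le_mul_of_nonneg_right _ (by positivity)
        calc ((1 : ℝ) + 1 / ((p : ℝ) + 1)) ^ (p + 1)
            ≤ Real.exp (1 / ((p : ℝ) + 1)) ^ (p + 1) := h2
          _ = Real.exp 1 := h3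
          _ ≤ 4 := h4

/-- For every positive integer `p`, `(p!)² · (p+2)^{p(p+1)} ≤ (p+1)^{p(p+3)}`. -/
theorem stmt_1 (p : ℕ) (hp : 0 < p) :
    (p !) ^ 2 * (p + 2) ^ (p * (p + 1)) ≤ (p + 1) ^ (p * (p + 3)) := by
  have key : ((p ! : ℝ)) ^ 2 * ((p : ℝ) + 2) ^ (p * (p + 1))
      ≤ ((p : ℝ) + 1) ^ (p * (p + 3)) := by
    have hA : ((p ! : ℝ)) ^ 2 * (4 : ℝ) ^ p ≤ ((p : ℝ) + 1) ^ (2 * p) := by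
      have := aux_fact_bound p
      have h2 : ((2 : ℝ) ^ p * (p ! : ℝ)) ^ 2 ≤ (((p : ℝ) + 1) ^ p) ^ 2 :=
        pow_le_pow_left₀ (by positivity) this 2
      calc ((p ! : ℝ)) ^ 2 * (4 : ℝ) ^ p
          = ((2 : ℝ) ^ p * (p ! : ℝ)) ^ 2 := by
            rw [mul_pow, ← pow_mul]
            rw [show (4 : ℝ) = 2 ^ 2 by norm_num, ← pow_mul]
            ring
        _ ≤ (((p : ℝ) + 1) ^ p) ^ 2 := h2
        _ = ((p : ℝ) + 1) ^ (2 * p) := by rw [← pow_mul]; ring_nf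
    have hB : ((p : ℝ) + 2) ^ (p * (p + 1)) ≤ (4 : ℝ) ^ p * ((p : ℝ) + 1) ^ (p * (p + 1)) := by
      have h := aux_exp_bound p
      have hpow : (((p : ℝ) + 2) ^ (p + 1)) ^ p ≤ ((4 : ℝ) * ((p : ℝ) + 1) ^ (p + 1)) ^ p :=
        pow_le_pow_left₀ (by positivity) h p
      calc ((p : ℝ) + 2) ^ (p * (p + 1))
          = (((p : ℝ) + 2) ^ (p + 1)) ^ p := by rw [← pow_mul]; ring_nf
        _ ≤ ((4 : ℝ) * ((p : ℝ) + 1) ^ (p + 1)) ^ p := hpow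
        _ = (4 : ℝ) ^ p * ((p : ℝ) + 1) ^ (p * (p + 1)) := by
            rw [mul_pow, ← pow_mul]; ring_nf
    have h4pos : (0 : ℝ) < (4 : ℝ) ^ p := by positivity
    have hmul : ((p ! : ℝ)) ^ 2 * ((p : ℝ) + 2) ^ (p * (p + 1)) * (4 : ℝ) ^ p
        ≤ ((p : ℝ) + 1) ^ (2 * p) * ((4 : ℝ) ^ p * ((p : ℝ) + 1) ^ (p * (p + 1))) := by
      calc ((p ! : ℝ)) ^ 2 * ((p : ℝ) + 2) ^ (p * (p + 1)) * (4 : ℝ) ^ p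
          = (((p ! : ℝ)) ^ 2 * (4 : ℝ) ^ p) * ((p : ℝ) + 2) ^ (p * (p + 1)) := by ring
        _ ≤ (((p : ℝ) + 1) ^ (2 * p)) * ((4 : ℝ) ^ p * ((p : ℝ) + 1) ^ (p * (p + 1))) :=
            mul_le_mul hA hB (by positivity) (by positivity)
    have heq : ((p : ℝ) + 1) ^ (2 * p) * ((p : ℝ) + 1) ^ (p * (p + 1))
        = ((p : ℝ) + 1) ^ (p * (p + 3)) := by
      rw [← pow_add]; ring_nf
    nlinarith [hmul, h4pos, heq]
  have := key
  have hcast : ((p !) ^ 2 * (p + 2) ^ (p * (p + 1)) : ℝ) ≤ ((p + 1) ^ (p * (p + 3)) : ℕ) := by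
    push_cast
    convert key using 2
  exact_mod_cast hcast
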